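/- arXiv:2507.06731 — 2 statements merged into one kernel-verified Lean document; each statement's English description precedes it below -/
import Mathlib

section
/- Let H be a real Hilbert space, V ⊆ H a closed subspace with orthogonal projection Π_V, and λ : H →L[ℝ] ℝ a continuous linear functional with Riesz representer v_λ. Then the generalized power function of λ equals the distance of the Riesz representer to the subspace: P_V(λ) = ‖v_λ − Π_V(v_λ)‖ = dist(v_λ, V), where P_V(λ) is the supremum of |λ(u − Π_V(u))| over all u in the closed unit ball of H. -/
open scoped InnerProductSpace

/-- The generalized power function of a functional `λ`, defined as the
supremum of `|λ (u - Π_V u)|` over the closed unit ball, equals the norm of the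
projection residual of its Riesz representer, which in turn equals the distance of the
Riesz representer to the subspace. -/
theorem power_function_eq_dist_riesz_representer
    {H : Type*} [NormedAddCommGroup H] [InnerProductSpace ℝ H] [CompleteSpace H]
    (V : Submodule ℝ H) [V.HasOrthogonalProjection]
    (l : H →L[ℝ] ℝ) (vl : H) (hvl : vl = (InnerProductSpace.toDual ℝ H).symm l) :
    (⨆ u : {u : H // ‖u‖ ≤ 1}, |l ((u : H) - (V.orthogonalProjectionOnto (u : H) : H))|)
        = ‖vl - (V.orthogonalProjectionOnto vl : H)‖ ∧
      ‖vl - (V.orthogonalProjectionOnto vl : H)‖ = Metric.infDist vl (V : Set H) := by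
  set r : H := vl - (V.orthogonalProjectionOnto vl : H) with hr
  have hrV : r ∈ Vᗮ := V.sub_starProjection_mem_orthogonal vl
  have key : ∀ u : H, l (u - (V.orthogonalProjectionOnto u : H)) = ⟪r, u⟫_ℝ := by
    intro u
    have hlu : ∀ x : H, l x = ⟪vl, x⟫_ℝ := by
      intro x
      rw [hvl, InnerProductSpace.toDual_symm_apply]
    have huV : u - (V.orthogonalProjectionOnto u : H) ∈ Vᗮ :=
      V.sub_starProjection_mem_orthogonal u
    have h2 : ⟪r, (V.orthogonalProjectionOnto u : H)⟫_ℝ = 0 := by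
      rw [real_inner_comm]
      exact hrV _ (V.orthogonalProjectionOnto u).2
    have h1' : ⟪(V.orthogonalProjectionOnto vl : H), u - (V.orthogonalProjectionOnto u : H)⟫_ℝ = 0 := by
      exact huV _ (V.orthogonalProjectionOnto vl).2
    calc l (u - (V.orthogonalProjectionOnto u : H))
        = ⟪vl, u - (V.orthogonalProjectionOnto u : H)⟫_ℝ := hlu _
      _ = ⟪r + (V.orthogonalProjectionOnto vl : H), u - (V.orthogonalProjectionOnto u : H)⟫_ℝ := by
          rw [hr, sub_add_cancel]
      _ = ⟪r, u - (V.orthogonalProjectionOnto u : H)⟫_ℝ := by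
          rw [inner_add_left, h1', add_zero]
      _ = ⟪r, u⟫_ℝ - ⟪r, (V.orthogonalProjectionOnto u : H)⟫_ℝ := inner_sub_right _ _ _
      _ = ⟪r, u⟫_ℝ := by rw [h2, sub_zero]
  have hbdd : ∀ u : {u : H // ‖u‖ ≤ 1},
      |l ((u : H) - (V.orthogonalProjectionOnto (u : H) : H))| ≤ ‖r‖ := by
    intro u
    rw [key]
    calc |⟪r, (u : H)⟫_ℝ| ≤ ‖r‖ * ‖(u : H)‖ := abs_real_inner_le_norm _ _
      _ ≤ ‖r‖ * 1 := by
          exact mul_le_mul_of_nonneg_left u.2 (norm_nonneg r)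
      _ = ‖r‖ := mul_one _
  haveI : Nonempty {u : H // ‖u‖ ≤ 1} := ⟨⟨0, by simp⟩⟩
  constructor
  · apply le_antisymm
    · exact ciSup_le hbdd
    · by_cases hz : r = 0
      · rw [hz, norm_zero]
        exact le_ciSup_of_le ⟨‖r‖, Set.forall_mem_range.2 hbdd⟩ ⟨0, by simp⟩ (abs_nonneg _)
      · have hnr : (0 : ℝ) < ‖r‖ := norm_pos_iff.mpr hz
        have : |l ((‖r‖⁻¹ • r) - (V.orthogonalProjectionOnto (‖r‖⁻¹ • r) : H))| = ‖r‖ := by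
          rw [key, real_inner_smul_right, real_inner_self_eq_norm_sq]
          rw [abs_of_nonneg (by positivity)]
          field_simp
        calc ‖r‖ = |l ((‖r‖⁻¹ • r) - (V.orthogonalProjectionOnto (‖r‖⁻¹ • r) : H))| := this.symm
          _ ≤ _ := le_ciSup (⟨‖r‖, Set.forall_mem_range.2 hbdd⟩ : BddAbove _)
              (⟨‖r‖⁻¹ • r, by rw [norm_smul]; simp [abs_of_nonneg hnr.le, inv_mul_cancel₀ hnr.ne']⟩ :
                {u : H // ‖u‖ ≤ 1})
  · apply le_antisymm
    · refine le_of_not_gt fun h => ?_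
      obtain ⟨y, hy, hlt⟩ := (Metric.infDist_lt_iff ⟨0, V.zero_mem⟩).1 h
      have hle : ‖r‖ ≤ dist vl y := by
        rw [dist_eq_norm, hr, ← Submodule.starProjection_apply, Submodule.starProjection_minimal]
        have hbb : BddBelow (Set.range fun w : V => ‖vl - (w : H)‖) :=
          ⟨0, Set.forall_mem_range.2 fun w => norm_nonneg _⟩
        exact ciInf_le hbb ⟨y, hy⟩
      linarith
    · have := Metric.infDist_le_dist_of_mem (x := vl) (V.orthogonalProjectionOnto vl).2
      rwa [dist_eq_norm] at this
end

section
/- Let H be a real Hilbert space, V ⊆ H a closed subspace with orthogonal projection Π_V, and let S_L and S_B be two families of continuous linear functionals on H with Riesz representers. Let N : H → ℝ be a function, and let C_L, C_B ≥ 0 and P̄ ≥ 0 be constants such that: (i) for every w ∈ H, N(w) ≤ C_L · sup_{λ ∈ S_L} |λ(w)| + C_B · sup_{λ ∈ S_B} |λ(w)| (a well-posedness estimate), and (ii) for every λ ∈ S_L ∪ S_B, the representer satisfies ‖v_λ − Π_V(v_λ)‖ ≤ P̄ (a uniform power function bound). Then for every u ∈ H, the generalized interpolation error e := u − Π_V(u)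 satisfies N(e) ≤ (C_L + C_B) · P̄ · ‖u‖. -/
open scoped InnerProductSpace

/-- Abstract passage from a well-posedness estimate to an error bound for
the projection (symmetric collocation) approximant: if
`N w ≤ C_L · sup_{λ ∈ S_L} |λ w| + C_B · sup_{λ ∈ S_B} |λ w|` for all `w`, and the
projection residuals of the Riesz representers of all functionals in `S_L ∪ S_B` are
bounded by `P̄`, then the interpolation error `e = u - Π_V u` satisfies
`N e ≤ (C_L + C_B) · P̄ · ‖u‖`. -/
theorem error_bound_from_wellposedness_and_power_bound
    {H : Type*} [NormedAddCommGroup H] [InnerProductSpace ℝ H] [CompleteSpace H]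
    (V : Submodule ℝ H) [V.HasOrthogonalProjection]
    (SL SB : Set (H →L[ℝ] ℝ)) (hSL : SL.Nonempty) (hSB : SB.Nonempty)
    (N : H → ℝ) (CL CB Pbar : ℝ) (hCL : 0 ≤ CL) (hCB : 0 ≤ CB) (hP : 0 ≤ Pbar)
    (hwp : ∀ w : H,
      N w ≤ CL * (⨆ l : SL, |(l : H →L[ℝ] ℝ) w|) + CB * (⨆ l : SB, |(l : H →L[ℝ] ℝ) w|))
    (hpow : ∀ l ∈ SL ∪ SB,
      ‖(InnerProductSpace.toDual ℝ H).symm l -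
          (V.orthogonalProjectionOnto ((InnerProductSpace.toDual ℝ H).symm l) : H)‖ ≤ Pbar)
    (u : H) :
    N (u - (V.orthogonalProjectionOnto u : H)) ≤ (CL + CB) * Pbar * ‖u‖ := by
  set e : H := u - (V.orthogonalProjectionOnto u : H) with he
  have heV : e ∈ Vᗮ := by exact V.sub_starProjection_mem_orthogonal u
  -- ‖e‖ ≤ ‖u‖
  have hnorm : ‖e‖ ≤ ‖u‖ := by
    have h1 : ⟪e, e⟫_ℝ = ⟪e, u⟫_ℝ := by
      have : ⟪e, (V.orthogonalProjectionOnto u : H)⟫_ℝ = 0 :=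
        (Submodule.mem_orthogonal' V e).mp heV _ (V.orthogonalProjectionOnto u).2
      rw [he]
      rw [inner_sub_right, ← he, this, sub_zero]
    nlinarith [real_inner_le_norm e u, real_inner_self_eq_norm_sq e, norm_nonneg e,
      norm_nonneg u]
  -- pointwise bound on functionals
  have key : ∀ l ∈ SL ∪ SB, |(l : H →L[ℝ] ℝ) e| ≤ Pbar * ‖u‖ := by
    intro l hl
    set v : H := (InnerProductSpace.toDual ℝ H).symm l with hv
    have hle : l e = ⟪v - (V.orthogonalProjectionOnto v : H), e⟫_ℝ := by
      have h0 : ⟪(V.orthogonalProjectionOnto v : H), e⟫_ℝ = 0 :=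
        heV _ (V.orthogonalProjectionOnto v).2
      rw [inner_sub_left, h0, sub_zero, hv, InnerProductSpace.toDual_symm_apply]
    calc |l e| = |⟪v - (V.orthogonalProjectionOnto v : H), e⟫_ℝ| := by rw [hle]
      _ ≤ ‖v - (V.orthogonalProjectionOnto v : H)‖ * ‖e‖ := abs_real_inner_le_norm _ _
      _ ≤ Pbar * ‖u‖ := by
          exact mul_le_mul (hpow l hl) hnorm (norm_nonneg e) hP
  have hsupL : (⨆ l : SL, |(l : H →L[ℝ] ℝ) e|) ≤ Pbar * ‖u‖ := by
    haveI : Nonempty SL := hSL.to_subtype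
    exact ciSup_le fun l => key l (Or.inl l.2)
  have hsupB : (⨆ l : SB, |(l : H →L[ℝ] ℝ) e|) ≤ Pbar * ‖u‖ := by
    haveI : Nonempty SB := hSB.to_subtype
    exact ciSup_le fun l => key l (Or.inr l.2)
  calc N e ≤ CL * (⨆ l : SL, |(l : H →L[ℝ] ℝ) e|) + CB * (⨆ l : SB, |(l : H →L[ℝ] ℝ) e|) :=
        hwp e
    _ ≤ CL * (Pbar * ‖u‖) + CB * (Pbar * ‖u‖) := by
        gcongr
    _ = (CL + CB) * Pbar * ‖u‖ := by ring
end
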